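/- Let n, r be positive integers and c, d integers, with 𝒹₁ = gcd(c−d, n), 𝒹₂ = gcd(c+(r−1)d, n), and b = gcd(r, n). Define on the set of pairs (y, z) with y ∈ (n/𝒹₁)·ℤ/nℤ summed over r−1 coordinates and z ∈ (n/𝒹₂)·ℤ/nℤ the condition that z − y ≡ 0 (mod b). Then the proportion of tuples (y₁,...,y_{r−1}, z), with each y_i a multiple of n/𝒹₁ in ℤ/nℤ and z a multiple of n/𝒹₂ in ℤ/nℤ (assuming r ≥ 2), satisfying z − (y₁ + ⋯ + y_{r−1}) ≡ 0 (mod b), equals gcd(n/𝒹₁, n/𝒹₂, b)/b. -/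

import Mathlib

open AddSubgroup

lemma hmem_aux (n : ℕ) (a : ℕ) (x : ZMod n) :
    x ∈ AddSubgroup.zmultiples ((a : ℕ) : ZMod n) ↔ ∃ t : ZMod n, x = t * (a : ZMod n) := by
  rw [AddSubgroup.mem_zmultiples_iff]
  constructor
  · rintro ⟨k, rfl⟩
    exact ⟨(k : ZMod n), by rw [zsmul_eq_mul]⟩
  · rintro ⟨t, rfl⟩
    obtain ⟨k, rfl⟩ := ZMod.intCast_surjective t
    exact ⟨k, by rw [zsmul_eq_mul]⟩

lemma card_zmul (n : ℕ) (hn : 0 < n) (a : ℕ) :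
    Nat.card (AddSubgroup.zmultiples ((a : ℕ) : ZMod n)) = n / n.gcd a := by
  haveI : NeZero n := ⟨hn.ne'⟩
  rw [Nat.card_zmultiples, ZMod.addOrderOf_coe a hn.ne']

theorem aux_count (n k : ℕ) (hn : 0 < n) (hk : 0 < k) (d1 d2 b : ℕ)
    (hd1 : d1 ∣ n) (hd2 : d2 ∣ n) (hb : b ∣ n)
    (hd1p : 0 < d1) (hd2p : 0 < d2) (hbp : 0 < b) :
    b * Nat.card {p : (Fin k → ZMod n) × ZMod n //
        (∀ i, ∃ t : ZMod n, p.1 i = t * ((n / d1 : ℕ) : ZMod n)) ∧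
        (∃ t : ZMod n, p.2 = t * ((n / d2 : ℕ) : ZMod n)) ∧
        (∃ t : ZMod n, p.2 - ∑ i, p.1 i = t * ((b : ℕ) : ZMod n))}
    = Nat.gcd (Nat.gcd (n / d1) (n / d2)) b * (d1 ^ k * d2) := by
  haveI : NeZero n := ⟨hn.ne'⟩
  set m1 := n / d1 with hm1
  set m2 := n / d2 with hm2
  set m := Nat.gcd m1 m2 with hm
  set H1 : AddSubgroup (ZMod n) := AddSubgroup.zmultiples ((m1 : ℕ) : ZMod n) with hH1
  set H2 : AddSubgroup (ZMod n) := AddSubgroup.zmultiples ((m2 : ℕ) : ZMod n) with hH2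
  have hnb : 0 < n / b := Nat.div_pos (Nat.le_of_dvd hn hb) hbp
  -- the hom
  set f : ((Fin k → H1) × H2) →+ ZMod n := AddMonoidHom.mk'
    (fun p => ((n / b : ℕ) : ZMod n) * ((p.2 : ZMod n) - ∑ i, (p.1 i : ZMod n)))
    (by
      intro p q
      simp only [Prod.snd_add, Prod.fst_add, Pi.add_apply, AddSubgroup.coe_add,
        Finset.sum_add_distrib]
      ring) with hf
  -- condition 3 equivalence
  have h3iff : ∀ x : ZMod n,
      (∃ t : ZMod n, x = t * ((b : ℕ) : ZMod n)) ↔ ((n / b : ℕ) : ZMod n) * x = 0 := by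
    intro x
    constructor
    · rintro ⟨t, rfl⟩
      have hz : ((n / b : ℕ) : ZMod n) * ((b : ℕ) : ZMod n) = 0 := by
        rw [← Nat.cast_mul, Nat.div_mul_cancel hb, ZMod.natCast_self]
      rw [mul_left_comm, hz, mul_zero]
    · intro h
      have hxv : ((x.val : ℕ) : ZMod n) = x := ZMod.natCast_rightInverse x
      have hx : (((n / b) * x.val : ℕ) : ZMod n) = 0 := by
        rw [Nat.cast_mul, hxv, h]
      rw [ZMod.natCast_eq_zero_iff] at hx
      obtain ⟨j, hj⟩ := hx
      have hj' : (n / b) * x.val = (n / b) * (b * j) := by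
        rw [hj]
        conv_lhs => rw [← Nat.div_mul_cancel hb]
        ring
      have hxval : x.val = b * j := Nat.eq_of_mul_eq_mul_left hnb hj'
      refine ⟨(j : ZMod n), ?_⟩
      rw [← hxv, hxval, Nat.cast_mul, mul_comm]
  -- equivalence with the kernel
  have e : {p : (Fin k → ZMod n) × ZMod n //
        (∀ i, ∃ t : ZMod n, p.1 i = t * ((m1 : ℕ) : ZMod n)) ∧
        (∃ t : ZMod n, p.2 = t * ((m2 : ℕ) : ZMod n)) ∧
        (∃ t : ZMod n, p.2 - ∑ i, p.1 i = t * ((b : ℕ) : ZMod n))} ≃ f.ker := by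
    refine ⟨fun p => ⟨⟨fun i => ⟨p.1.1 i, (hmem_aux n m1 _).2 (p.2.1 i)⟩,
        ⟨p.1.2, (hmem_aux n m2 _).2 p.2.2.1⟩⟩, ?_⟩,
      fun q => ⟨⟨fun i => (q.1.1 i : ZMod n), (q.1.2 : ZMod n)⟩,
        fun i => (hmem_aux n m1 _).1 (q.1.1 i).2, (hmem_aux n m2 _).1 q.1.2.2, ?_⟩,
      fun p => rfl, fun q => rfl⟩
    · show f _ = 0
      simp only [hf, AddMonoidHom.mk'_apply]
      exact (h3iff _).1 p.2.2.2
    · refine (h3iff _).2 ?_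
      have := q.2
      rw [AddMonoidHom.mem_ker] at this
      simpa only [hf, AddMonoidHom.mk'_apply] using this
  -- card of the domain group
  have hm1dvd : m1 ∣ n := ⟨d1, (Nat.div_mul_cancel hd1).symm⟩
  have hm2dvd : m2 ∣ n := ⟨d2, (Nat.div_mul_cancel hd2).symm⟩
  have c1 : Nat.card H1 = d1 := by
    rw [hH1, card_zmul n hn, Nat.gcd_eq_right hm1dvd, Nat.div_div_self hd1 hn.ne']
  have c2 : Nat.card H2 = d2 := by
    rw [hH2, card_zmul n hn, Nat.gcd_eq_right hm2dvd, Nat.div_div_self hd2 hn.ne']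
  have hG : Nat.card ((Fin k → H1) × H2) = d1 ^ k * d2 := by
    rw [Nat.card_prod, Nat.card_fun, c1, c2, Nat.card_eq_fintype_card, Fintype.card_fin]
  -- range of f
  have hrange : f.range = AddSubgroup.zmultiples (((n / b) * m : ℕ) : ZMod n) := by
    apply le_antisymm
    · rintro x ⟨p, rfl⟩
      rw [hmem_aux]
      choose t ht using fun i => (hmem_aux n m1 (p.1 i : ZMod n)).1 (p.1 i).2
      obtain ⟨s, hs⟩ := (hmem_aux n m2 (p.2 : ZMod n)).1 p.2.2
      have e1 : ((m1 : ℕ) : ZMod n) = ((m : ℕ) : ZMod n) * ((m1 / m : ℕ) : ZMod n) := by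
        rw [← Nat.cast_mul, Nat.mul_div_cancel' (Nat.gcd_dvd_left m1 m2)]
      have e2 : ((m2 : ℕ) : ZMod n) = ((m : ℕ) : ZMod n) * ((m2 / m : ℕ) : ZMod n) := by
        rw [← Nat.cast_mul, Nat.mul_div_cancel' (Nat.gcd_dvd_right m1 m2)]
      refine ⟨s * ((m2 / m : ℕ) : ZMod n) - (∑ i, t i) * ((m1 / m : ℕ) : ZMod n), ?_⟩
      have hfp : f p = ((n / b : ℕ) : ZMod n) * ((p.2 : ZMod n) - ∑ i, (p.1 i : ZMod n)) := rfl
      rw [hfp, hs, Finset.sum_congr rfl (fun i _ => ht i), ← Finset.sum_mul, e1, e2,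
        Nat.cast_mul]
      ring
    · intro x hx
      rw [hmem_aux] at hx
      obtain ⟨s, rfl⟩ := hx
      set i0 : Fin k := ⟨0, hk⟩ with hi0
      set u' : ZMod n := ((Nat.gcdA m1 m2 : ℤ) : ZMod n) with hu'
      set v' : ZMod n := ((Nat.gcdB m1 m2 : ℤ) : ZMod n) with hv'
      have hbez : ((m : ℕ) : ZMod n) = ((m1 : ℕ) : ZMod n) * u' + ((m2 : ℕ) : ZMod n) * v' := by
        have h := Nat.gcd_eq_gcd_ab m1 m2
        have h2 : ((Nat.gcd m1 m2 : ℤ) : ZMod n)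
            = (((m1 : ℤ) * Nat.gcdA m1 m2 + (m2 : ℤ) * Nat.gcdB m1 m2 : ℤ) : ZMod n) := by
          rw [← h]
        push_cast at h2
        exact h2
      set a1 : H1 := ⟨(-(s * u')) * ((m1 : ℕ) : ZMod n),
        (hmem_aux n m1 _).2 ⟨-(s * u'), rfl⟩⟩ with ha1
      set z : H2 := ⟨(s * v') * ((m2 : ℕ) : ZMod n),
        (hmem_aux n m2 _).2 ⟨s * v', rfl⟩⟩ with hz
      set y : Fin k → H1 := fun i => if i = i0 then a1 else 0 with hy
      refine ⟨⟨y, z⟩, ?_⟩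
      have hsum : ∑ i, ((y i : ZMod n)) = (-(s * u')) * ((m1 : ℕ) : ZMod n) := by
        have hyy : ∀ i, ((y i : ZMod n))
            = if i = i0 then (-(s * u')) * ((m1 : ℕ) : ZMod n) else 0 := by
          intro i
          by_cases hi : i = i0 <;> simp [hy, hi, ha1]
        rw [Finset.sum_congr rfl (fun i _ => hyy i), Finset.sum_ite_eq' Finset.univ i0]
        simp
      have hfp : f ⟨y, z⟩ = ((n / b : ℕ) : ZMod n) * ((z : ZMod n) - ∑ i, (y i : ZMod n)) := rfl
      rw [hfp, hsum, Nat.cast_mul, hbez, hz]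
      show ((n / b : ℕ) : ZMod n) * ((s * v') * ((m2 : ℕ) : ZMod n) - _) = _
      ring
  -- card of the range
  have hgbm : 0 < Nat.gcd b m := Nat.gcd_pos_of_pos_left m hbp
  have hcard_range : Nat.card f.range = b / Nat.gcd b m := by
    rw [hrange, card_zmul n hn]
    have h1 : n.gcd ((n / b) * m) = (n / b) * Nat.gcd b m := by
      calc n.gcd ((n / b) * m) = ((n / b) * b).gcd ((n / b) * m) := by
            rw [Nat.div_mul_cancel hb]
        _ = (n / b) * Nat.gcd b m := Nat.gcd_mul_left _ _ _
    rw [h1]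
    calc n / ((n / b) * Nat.gcd b m) = ((n / b) * b) / ((n / b) * Nat.gcd b m) := by
          rw [Nat.div_mul_cancel hb]
      _ = b / Nat.gcd b m := Nat.mul_div_mul_left _ _ hnb
  -- first isomorphism theorem
  have hprod : Nat.card ((Fin k → H1) × H2) = Nat.card f.range * Nat.card f.ker := by
    rw [AddSubgroup.card_eq_card_quotient_mul_card_addSubgroup f.ker,
      Nat.card_congr (QuotientAddGroup.quotientKerEquivRange f).toEquiv]
  -- final arithmetic
  rw [Nat.card_congr e]
  have key : d1 ^ k * d2 = (b / Nat.gcd b m) * Nat.card f.ker := by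
    rw [← hG, hprod, hcard_range]
  have hgb : Nat.gcd b m ∣ b := Nat.gcd_dvd_left _ _
  calc b * Nat.card f.ker = (Nat.gcd b m * (b / Nat.gcd b m)) * Nat.card f.ker := by
        rw [Nat.mul_div_cancel' hgb]
    _ = Nat.gcd b m * ((b / Nat.gcd b m) * Nat.card f.ker) := by ring
    _ = Nat.gcd m b * (d1 ^ k * d2) := by rw [← key, Nat.gcd_comm]



theorem stmt_17 (n r : ℕ) (hn : 0 < n) (hr : 2 ≤ r) (c d : ℤ) :
    Nat.gcd r n *
      Nat.card {p : (Fin (r - 1) → ZMod n) × ZMod n //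
        (∀ i, ∃ t : ZMod n, p.1 i = t * ((n / Int.gcd (c - d) n : ℕ) : ZMod n)) ∧
        (∃ t : ZMod n, p.2 = t * ((n / Int.gcd (c + (r - 1) * d) n : ℕ) : ZMod n)) ∧
        (∃ t : ZMod n, p.2 - ∑ i, p.1 i = t * ((Nat.gcd r n : ℕ) : ZMod n))}
    = Nat.gcd (Nat.gcd (n / Int.gcd (c - d) n) (n / Int.gcd (c + (r - 1) * d) n)) (Nat.gcd r n) *
      ((Int.gcd (c - d) n) ^ (r - 1) * Int.gcd (c + (r - 1) * d) n) := by
  have hd1 : Int.gcd (c - d) n ∣ n :=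
    Int.natCast_dvd_natCast.mp (Int.gcd_dvd_right _ _)
  have hd2 : Int.gcd (c + (r - 1) * d) n ∣ n :=
    Int.natCast_dvd_natCast.mp (Int.gcd_dvd_right _ _)
  have hb : Nat.gcd r n ∣ n := Nat.gcd_dvd_right r n
  have hd1p : 0 < Int.gcd (c - d) n := Int.gcd_pos_of_ne_zero_right _ (by exact_mod_cast hn.ne')
  have hd2p : 0 < Int.gcd (c + (r - 1) * d) n :=
    Int.gcd_pos_of_ne_zero_right _ (by exact_mod_cast hn.ne')
  have hbp : 0 < Nat.gcd r n := Nat.gcd_pos_of_pos_right r hn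
  exact aux_count n (r - 1) hn (by omega) _ _ _ hd1 hd2 hb hd1p hd2p hbp
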